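/- Vanishing of Pfaffian polynomials in low dimensions: if dim T = m < 2n for some n ≥ 1, then pf_n(R) = 0 for every algebraic curvature tensor R on T and every orthonormal basis E₁, …, E_m of T used in the definition of pf_n. -/
import Mathlib


open scoped BigOperators

variable {T : Type*} [NormedAddCommGroup T] [InnerProductSpace ℝ T] [FiniteDimensional ℝ T]

/-- A map `T → T → T → T → ℝ` that is linear in each of its four arguments. -/
def IsQuadrilinear (R : T → T → T → T → ℝ) : Prop :=
  (∀ Y U V, IsLinearMap ℝ fun X => R X Y U V) ∧
  (∀ X U V, IsLinearMap ℝ fun Y => R X Y U V) ∧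
  (∀ X Y V, IsLinearMap ℝ fun U => R X Y U V) ∧
  (∀ X Y U, IsLinearMap ℝ fun V => R X Y U V)

/-- An algebraic curvature tensor on `T`. -/
def IsAlgCurv (R : T → T → T → T → ℝ) : Prop :=
  IsQuadrilinear R ∧
  (∀ X Y U V : T, R X Y U V = -R Y X U V) ∧
  (∀ X Y U V : T, R X Y U V = -R X Y V U) ∧
  (∀ X Y Z V : T, R X Y Z V + R Y Z X V + R Z X Y V = 0)

/-- `(Φ⁺R)(X,Y;U,V) := −2·(R(X,U;Y,V) + R(X,V;Y,U))`. -/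
noncomputable def PhiPlus (R : T → T → T → T → ℝ) : T → T → T → T → ℝ :=
  fun X Y U V => -2 * (R X U Y V + R X V Y U)

/-- The Pfaffian polynomial of degree `n`, evaluated on `R` with respect to the
orthonormal basis `E`; for `n = 0` it equals `1`. -/
noncomputable def pf {m : ℕ} (E : OrthonormalBasis (Fin m) ℝ T)
    (R : T → T → T → T → ℝ) (n : ℕ) : ℝ :=
  (1 / ((12 : ℝ) ^ n * (n.factorial : ℝ))) *
    ∑ σ : Equiv.Perm (Fin (2 * n)), ((Equiv.Perm.sign σ : ℤ) : ℝ) *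
      ∑ μ : Fin (2 * n) → Fin m, ∏ r : Fin n,
        PhiPlus R
          (E (μ ⟨2 * r.1, by have := r.isLt; omega⟩))
          (E (μ (σ ⟨2 * r.1, by have := r.isLt; omega⟩)))
          (E (μ ⟨2 * r.1 + 1, by have := r.isLt; omega⟩))
          (E (μ (σ ⟨2 * r.1 + 1, by have := r.isLt; omega⟩)))

/-- the Pfaffian polynomial `pf_n` vanishes on every algebraic curvature
tensor over a space of dimension `m < 2n` (for `n ≥ 1`). -/
theorem pf_vanishes_in_low_dimension {m n : ℕ} (hn : 1 ≤ n) (hm : m < 2 * n)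
    (E : OrthonormalBasis (Fin m) ℝ T)
    (R : T → T → T → T → ℝ) (hR : IsAlgCurv R) :
    pf E R n = 0 := by
  unfold pf
  rw [mul_eq_zero]
  right
  rw [show (∑ σ : Equiv.Perm (Fin (2 * n)), ((Equiv.Perm.sign σ : ℤ) : ℝ) *
      ∑ μ : Fin (2 * n) → Fin m, ∏ r : Fin n,
        PhiPlus R
          (E (μ ⟨2 * r.1, by have := r.isLt; omega⟩))
          (E (μ (σ ⟨2 * r.1, by have := r.isLt; omega⟩)))
          (E (μ ⟨2 * r.1 + 1, by have := r.isLt; omega⟩))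
          (E (μ (σ ⟨2 * r.1 + 1, by have := r.isLt; omega⟩)))) =
      ∑ μ : Fin (2 * n) → Fin m, ∑ σ : Equiv.Perm (Fin (2 * n)),
        ((Equiv.Perm.sign σ : ℤ) : ℝ) * ∏ r : Fin n,
        PhiPlus R
          (E (μ ⟨2 * r.1, by have := r.isLt; omega⟩))
          (E (μ (σ ⟨2 * r.1, by have := r.isLt; omega⟩)))
          (E (μ ⟨2 * r.1 + 1, by have := r.isLt; omega⟩))
          (E (μ (σ ⟨2 * r.1 + 1, by have := r.isLt; omega⟩))) from by
    simp_rw [Finset.mul_sum]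
    exact Finset.sum_comm]
  refine Finset.sum_eq_zero fun μ _ => ?_
  -- μ is not injective since card (Fin m) < card (Fin (2*n))
  have hcard : Fintype.card (Fin m) < Fintype.card (Fin (2 * n)) := by
    simpa using hm
  obtain ⟨i, j, hij, hμ⟩ := Fintype.exists_ne_map_eq_of_card_lt μ hcard
  set τ : Equiv.Perm (Fin (2 * n)) := Equiv.swap i j with hτ
  have hμτ : ∀ k, μ (τ k) = μ k := by
    intro k
    rcases eq_or_ne k i with rfl | hki
    · simp [hτ, Equiv.swap_apply_left, hμ]
    rcases eq_or_ne k j with rfl | hkj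
    · simp [hτ, Equiv.swap_apply_right, hμ]
    · rw [hτ, Equiv.swap_apply_of_ne_of_ne hki hkj]
  set f : Equiv.Perm (Fin (2 * n)) → ℝ := fun σ =>
    ((Equiv.Perm.sign σ : ℤ) : ℝ) * ∏ r : Fin n,
        PhiPlus R
          (E (μ ⟨2 * r.1, by have := r.isLt; omega⟩))
          (E (μ (σ ⟨2 * r.1, by have := r.isLt; omega⟩)))
          (E (μ ⟨2 * r.1 + 1, by have := r.isLt; omega⟩))
          (E (μ (σ ⟨2 * r.1 + 1, by have := r.isLt; omega⟩))) with hf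
  show ∑ σ, f σ = 0
  have hkey : ∀ σ, f (τ * σ) = -f σ := by
    intro σ
    have hsgn : ((Equiv.Perm.sign (τ * σ) : ℤ) : ℝ) =
        -((Equiv.Perm.sign σ : ℤ) : ℝ) := by
      rw [Equiv.Perm.sign_mul, hτ, Equiv.Perm.sign_swap hij]
      push_cast
      ring
    simp only [hf, Equiv.Perm.mul_apply, hμτ, hsgn, neg_mul]
  have h1 : ∑ σ, f σ = ∑ σ, f (τ * σ) :=
    (Equiv.sum_comp (Equiv.mulLeft τ) f).symm
  have h2 : ∑ σ, f σ = -∑ σ, f σ := by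
    nth_rewrite 1 [h1]
    rw [Finset.sum_congr rfl (fun σ _ => hkey σ), Finset.sum_neg_distrib]
  linarith
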